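/- Let n ≥ 2, m ≥ 2, and t be integers with m + 1 < 2^t ≤ 2^{nm}. Suppose there exists a perfect factor PF_{2^n}(m, t) over ZMod 2^n, F : Fin 2^{nm−t} → (ZMod 2^t → ZMod 2^n), such that for every index a the sum of all 2^t entries of F(a) equals 0 in ZMod 2^n. Then there exists a (2^n, 2^t; n, m + 1)-de Bruijn array code of size 2^{nm − t}. -/

import Mathlib

namespace DBACProof

/-- successor relation in the binary de Bruijn graph of order `n` -/
def IsSucc (n : ℕ) (w w' : Fin n → ZMod 2) : Prop :=
  ∀ (x : ℕ) (h : x + 1 < n), w' ⟨x, by omega⟩ = w ⟨x + 1, h⟩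

/-- base point -/
def w0 (n : ℕ) : Fin n → ZMod 2 := fun _ => 0

/-- forward orbit of the base point -/
def O {n : ℕ} (σ : Equiv.Perm (Fin n → ZMod 2)) : Set (Fin n → ZMod 2) :=
  Set.range fun k : ℕ => (σ ^ k) (w0 n)

variable {n : ℕ}

lemma mem_O (σ : Equiv.Perm (Fin n → ZMod 2)) (k : ℕ) : (σ ^ k) (w0 n) ∈ O σ :=
  ⟨k, rfl⟩

lemma w0_mem_O (σ : Equiv.Perm (Fin n → ZMod 2)) : w0 n ∈ O σ := ⟨0, rfl⟩

lemma apply_mem_O (σ : Equiv.Perm (Fin n → ZMod 2)) {x} (hx : x ∈ O σ) : σ x ∈ O σ := by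
  obtain ⟨k, rfl⟩ := hx
  exact ⟨k + 1, by simp [pow_succ', Equiv.Perm.mul_apply]⟩

lemma inv_pow_eq (σ : Equiv.Perm (Fin n → ZMod 2)) : σ⁻¹ = σ ^ (orderOf σ - 1) := by
  have h1 : 0 < orderOf σ := orderOf_pos σ
  have : σ ^ (orderOf σ - 1) * σ = 1 := by
    rw [← pow_succ, show orderOf σ - 1 + 1 = orderOf σ by omega, pow_orderOf_eq_one]
  exact (inv_eq_of_mul_eq_one_left this)

lemma inv_mem_O (σ : Equiv.Perm (Fin n → ZMod 2)) {x} (hx : x ∈ O σ) : σ⁻¹ x ∈ O σ := by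
  obtain ⟨k, rfl⟩ := hx
  rw [inv_pow_eq, ← Equiv.Perm.mul_apply, ← pow_add]
  exact mem_O σ _

lemma mem_O_of_pow_mem (σ : Equiv.Perm (Fin n → ZMod 2)) (l : ℕ) {x}
    (hx : (σ ^ l) x ∈ O σ) : x ∈ O σ := by
  induction l with
  | zero => simpa using hx
  | succ l ih =>
    apply ih
    have : σ⁻¹ ((σ ^ (l + 1)) x) ∈ O σ := inv_mem_O σ hx
    rwa [pow_succ', Equiv.Perm.mul_apply, Equiv.Perm.inv_def, Equiv.symm_apply_apply] at this


/-- agreement of the swapped permutation with the original along an orbit avoiding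
the preimages of the swapped points -/
lemma pow_swap_eq (σ : Equiv.Perm (Fin n → ZMod 2)) (u v : Fin n → ZMod 2) (k : ℕ)
    (y : Fin n → ZMod 2)
    (h : ∀ j < k, (σ ^ j) y ≠ σ⁻¹ u ∧ (σ ^ j) y ≠ σ⁻¹ v) :
    ((Equiv.swap u v * σ) ^ k) y = (σ ^ k) y := by
  induction k with
  | zero => rfl
  | succ k ih =>
    have ih' := ih (fun j hj => h j (by omega))
    rw [pow_succ', Equiv.Perm.mul_apply, ih', Equiv.Perm.mul_apply]
    have hk := h k (by omega)
    have h1 : σ ((σ ^ k) y) ≠ u := fun he => hk.1 (by rw [← he, Equiv.Perm.inv_def, Equiv.symm_apply_apply])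
    have h2 : σ ((σ ^ k) y) ≠ v := fun he => hk.2 (by rw [← he, Equiv.Perm.inv_def, Equiv.symm_apply_apply])
    rw [Equiv.swap_apply_of_ne_of_ne h1 h2, ← Equiv.Perm.mul_apply, ← pow_succ']

lemma pow_mul_period (σ : Equiv.Perm (Fin n → ZMod 2)) {P : ℕ} (hP : (σ ^ P) (w0 n) = w0 n)
    (q : ℕ) : (σ ^ (P * q)) (w0 n) = w0 n := by
  induction q with
  | zero => rfl
  | succ q ih =>
    rw [show P * (q + 1) = P * q + P by ring, pow_add, Equiv.Perm.mul_apply, hP, ih]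

lemma pow_mod_period (σ : Equiv.Perm (Fin n → ZMod 2)) {P : ℕ} (hP : (σ ^ P) (w0 n) = w0 n)
    (k : ℕ) : (σ ^ (k % P)) (w0 n) = (σ ^ k) (w0 n) := by
  conv_rhs => rw [(Nat.mod_add_div k P).symm]
  rw [pow_add, Equiv.Perm.mul_apply, pow_mul_period σ hP]

lemma inj_below (σ : Equiv.Perm (Fin n → ZMod 2)) {P : ℕ}
    (hmin : ∀ p, 0 < p → p < P → (σ ^ p) (w0 n) ≠ w0 n)
    {s t : ℕ} (hst : s ≤ t) (ht : t < P) (he : (σ ^ s) (w0 n) = (σ ^ t) (w0 n)) : s = t := by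
  by_contra hne
  have hd : 0 < t - s := by omega
  have : (σ ^ s) ((σ ^ (t - s)) (w0 n)) = (σ ^ s) (w0 n) := by
    rw [← Equiv.Perm.mul_apply, ← pow_add, show s + (t - s) = t by omega, he]
  have : (σ ^ (t - s)) (w0 n) = w0 n := (σ ^ s).injective this
  exact hmin _ hd (by omega) this


/-- the pure cycling register (rotation) permutation -/
def rot (hn : 0 < n) : Equiv.Perm (Fin n → ZMod 2) where
  toFun w := fun x => w ⟨((x : ℕ) + 1) % n, Nat.mod_lt _ hn⟩
  invFun w := fun x => w ⟨((x : ℕ) + (n - 1)) % n, Nat.mod_lt _ hn⟩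
  left_inv w := by
    funext x
    have key : (((x : ℕ) + (n - 1)) % n + 1) % n = (x : ℕ) := by
      rw [Nat.mod_add_mod, show (x : ℕ) + (n - 1) + 1 = (x : ℕ) + n by omega,
        Nat.add_mod_right, Nat.mod_eq_of_lt x.isLt]
    exact congrArg w (Fin.ext key)
  right_inv w := by
    funext x
    have key : (((x : ℕ) + 1) % n + (n - 1)) % n = (x : ℕ) := by
      rw [Nat.mod_add_mod, show (x : ℕ) + 1 + (n - 1) = (x : ℕ) + n by omega,
        Nat.add_mod_right, Nat.mod_eq_of_lt x.isLt]
    exact congrArg w (Fin.ext key)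

lemma rot_succ (hn : 0 < n) (w : Fin n → ZMod 2) : IsSucc n w (rot hn w) := by
  intro x h
  show w _ = w _
  congr 1
  apply Fin.ext
  show (x + 1) % n = x + 1
  exact Nat.mod_eq_of_lt h

/-- reading off the orbit: position `j` of `y` is position `0` of `σ^j y` -/
lemma pow_at_zero (hn : 0 < n) (σ : Equiv.Perm (Fin n → ZMod 2))
    (hσ : ∀ y, IsSucc n y (σ y)) :
    ∀ (j : ℕ) (hj : j < n) (y : Fin n → ZMod 2), ((σ ^ j) y) ⟨0, hn⟩ = y ⟨j, hj⟩ := by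
  intro j
  induction j with
  | zero => intro hj y; rfl
  | succ j ih =>
    intro hj y
    have : (σ ^ (j + 1)) y = (σ ^ j) (σ y) := by
      rw [pow_succ, Equiv.Perm.mul_apply]
    rw [this, ih (by omega) (σ y), hσ y j hj]

/-- connectivity of the de Bruijn graph: an explicit path -/
lemma connect (hn : 0 < n) (v w : Fin n → ZMod 2) :
    ∃ p : ℕ → (Fin n → ZMod 2), p 0 = w ∧ p n = v ∧ ∀ i, IsSucc n (p i) (p (i + 1)) := by
  refine ⟨fun i x => if h : (x : ℕ) + i < n then w ⟨(x : ℕ) + i, h⟩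
    else v ⟨((x : ℕ) + i) % n, Nat.mod_lt _ hn⟩, ?_, ?_, ?_⟩
  · funext x
    simp only [Nat.add_zero, x.isLt, dif_pos]
  · funext x
    have h1 : ¬ ((x : ℕ) + n < n) := by omega
    have h2 : ((x : ℕ) + n) % n = (x : ℕ) := by
      rw [Nat.add_mod_right, Nat.mod_eq_of_lt x.isLt]
    simp only [h1, dif_neg, not_false_iff]
    congr 1
    exact Fin.ext h2
  · intro i x h
    show (if h : x + (i + 1) < n then w ⟨x + (i + 1), h⟩
        else v ⟨(x + (i + 1)) % n, Nat.mod_lt _ hn⟩)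
      = (if h : (x + 1) + i < n then w ⟨(x + 1) + i, h⟩
        else v ⟨((x + 1) + i) % n, Nat.mod_lt _ hn⟩)
    simp only [show x + (i + 1) = (x + 1) + i from by ring]


/-- two successors of the same vertex agree except possibly in the last coordinate -/
lemma succ_eq_of_lt (hsucc1 : IsSucc n w y1) (hsucc2 : IsSucc n w y2) :
    ∀ (x : ℕ) (h : x + 1 < n), y1 ⟨x, by omega⟩ = y2 ⟨x, by omega⟩ := by
  intro x h
  rw [hsucc1 x h, hsucc2 x h]

/-- the cycle-joining (cross-join) step -/
lemma merge (σ : Equiv.Perm (Fin n → ZMod 2)) (hσ : ∀ y, IsSucc n y (σ y))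
    {w w' : Fin n → ZMod 2} (hw : w ∈ O σ) (hw' : w' ∉ O σ) (hsucc : IsSucc n w w') :
    ∃ σ' : Equiv.Perm (Fin n → ZMod 2), (∀ y, IsSucc n y (σ' y)) ∧ O σ ∪ {w'} ⊆ O σ' := by
  classical
  set u := σ w with hu
  set σ' := Equiv.swap u w' * σ with hσ'
  have hudiff : ∀ (x : ℕ) (h : x + 1 < n), u ⟨x, by omega⟩ = w' ⟨x, by omega⟩ :=
    succ_eq_of_lt (hσ w) hsucc
  have huO : u ∈ O σ := apply_mem_O σ hw
  have hσ's : ∀ y, IsSucc n y (σ' y) := by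
    intro y x h
    show Equiv.swap u w' (σ y) ⟨x, by omega⟩ = y ⟨x + 1, h⟩
    rcases eq_or_ne (σ y) u with he | he
    · rw [he, Equiv.swap_apply_left, ← hudiff x h, ← he]
      exact hσ y x h
    · rcases eq_or_ne (σ y) w' with he2 | he2
      · rw [he2, Equiv.swap_apply_right, hudiff x h, ← he2]
        exact hσ y x h
      · rw [Equiv.swap_apply_of_ne_of_ne he he2]
        exact hσ y x h
  refine ⟨σ', hσ's, ?_⟩
  have hbO : σ⁻¹ w' ∉ O σ := fun hb => hw' (by
    have := apply_mem_O σ hb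
    rwa [Equiv.Perm.inv_def, Equiv.apply_symm_apply] at this)
  have haO : σ⁻¹ u ∈ O σ := inv_mem_O σ huO
  have hout : ∀ l, (σ ^ l) w' ∉ O σ := by
    intro l hl
    exact hw' (mem_O_of_pow_mem σ l hl)
  -- the minimal period P of w0
  obtain ⟨P, hPpos, hPper, hPmin⟩ :
      ∃ P, 0 < P ∧ (σ ^ P) (w0 n) = w0 n ∧
        ∀ p, 0 < p → p < P → (σ ^ p) (w0 n) ≠ w0 n := by
    have hNex : ∃ p, 0 < p ∧ (σ ^ p) (w0 n) = w0 n :=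
      ⟨orderOf σ, orderOf_pos σ, by rw [pow_orderOf_eq_one]; rfl⟩
    exact ⟨Nat.find hNex, (Nat.find_spec hNex).1, (Nat.find_spec hNex).2,
      fun p hp hpP hep => Nat.find_min hNex hpP ⟨hp, hep⟩⟩
  -- K : first time the orbit of w0 hits σ⁻¹ u
  obtain ⟨K, hKa, hKmin⟩ :
      ∃ K, (σ ^ K) (w0 n) = σ⁻¹ u ∧ ∀ i < K, (σ ^ i) (w0 n) ≠ σ⁻¹ u := by
    have hKex : ∃ k, (σ ^ k) (w0 n) = σ⁻¹ u := haO
    exact ⟨Nat.find hKex, Nat.find_spec hKex, fun i hi => Nat.find_min hKex hi⟩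
  have hKP : K < P := by
    by_contra hKP
    push_neg at hKP
    have h1 : (σ ^ (K % P)) (w0 n) = σ⁻¹ u := by rw [pow_mod_period σ hPper, hKa]
    have h2 : K % P < P := Nat.mod_lt _ hPpos
    exact hKmin _ (by omega) h1
  -- segment 1 : σ'^j w0 = σ^j w0 for j ≤ K
  have hseg1 : ∀ j ≤ K, (σ' ^ j) (w0 n) = (σ ^ j) (w0 n) := by
    intro j hj
    apply pow_swap_eq
    intro i hi
    exact ⟨hKmin i (by omega), fun he => hbO (he ▸ mem_O σ i)⟩
  have hstep1 : (σ' ^ (K + 1)) (w0 n) = w' := by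
    rw [pow_succ', Equiv.Perm.mul_apply, hseg1 K le_rfl, hKa]
    show Equiv.swap u w' (σ (σ⁻¹ u)) = w'
    rw [Equiv.Perm.inv_def, Equiv.apply_symm_apply, Equiv.swap_apply_left]
  -- L : first time the orbit of w' hits σ⁻¹ w'
  obtain ⟨L, hLb, hLmin⟩ :
      ∃ L, (σ ^ L) w' = σ⁻¹ w' ∧ ∀ i < L, (σ ^ i) w' ≠ σ⁻¹ w' := by
    have hLex : ∃ l, (σ ^ l) w' = σ⁻¹ w' := ⟨orderOf σ - 1, by rw [← inv_pow_eq]⟩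
    exact ⟨Nat.find hLex, Nat.find_spec hLex, fun i hi => Nat.find_min hLex hi⟩
  -- segment 2 : σ'^l w' = σ^l w' for l ≤ L
  have hseg2 : ∀ l ≤ L, (σ' ^ l) w' = (σ ^ l) w' := by
    intro l hl
    apply pow_swap_eq
    intro i hi
    exact ⟨fun he => hout i (he ▸ haO), hLmin i (by omega)⟩
  have hstep2 : (σ' ^ (K + 1 + L + 1)) (w0 n) = u := by
    rw [show K + 1 + L + 1 = (L + 1) + (K + 1) by ring, pow_add, Equiv.Perm.mul_apply,
      hstep1, pow_succ', Equiv.Perm.mul_apply, hseg2 L le_rfl, hLb]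
    show Equiv.swap u w' (σ (σ⁻¹ w')) = u
    rw [Equiv.Perm.inv_def, Equiv.apply_symm_apply, Equiv.swap_apply_right]
  -- u is σ^(K+1) w0
  have hupow : (σ ^ (K + 1)) (w0 n) = u := by
    rw [pow_succ', Equiv.Perm.mul_apply, hKa, Equiv.Perm.inv_def, Equiv.apply_symm_apply]
  -- segment 3 : σ'^d u = σ^d u for K + 1 + d < P
  have hseg3 : ∀ d, K + 1 + d < P → (σ' ^ d) u = (σ ^ d) u := by
    intro d hd
    apply pow_swap_eq
    intro i hi
    constructor
    · intro he
      have h1 : (σ ^ (i + (K + 1))) (w0 n) = (σ ^ K) (w0 n) := by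
        rw [pow_add, Equiv.Perm.mul_apply, hupow, he, hKa]
      have h2 := inj_below σ hPmin (show K ≤ i + (K + 1) by omega) (by omega) h1.symm
      omega
    · intro he
      refine hbO (he ▸ ?_)
      rw [← hupow, ← Equiv.Perm.mul_apply, ← pow_add]
      exact mem_O σ _
  -- coverage
  intro x hx
  rcases hx with hx | hx
  · obtain ⟨k, hk⟩ := hx
    have hk' : (σ ^ k) (w0 n) = x := hk
    have hkP : (σ ^ (k % P)) (w0 n) = x := by rw [pow_mod_period σ hPper, hk']
    have hiP : k % P < P := Nat.mod_lt _ hPpos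
    rcases le_or_gt (k % P) K with hiK | hiK
    · exact ⟨k % P, show (σ' ^ (k % P)) (w0 n) = x by rw [hseg1 _ hiK]; exact hkP⟩
    · refine ⟨(k % P - (K + 1)) + (K + 1 + L + 1),
        show (σ' ^ ((k % P - (K + 1)) + (K + 1 + L + 1))) (w0 n) = x from ?_⟩
      rw [pow_add, Equiv.Perm.mul_apply, hstep2, hseg3 _ (by omega), ← hupow,
        ← Equiv.Perm.mul_apply, ← pow_add, show k % P - (K + 1) + (K + 1) = k % P by omega]
      exact hkP
  · rw [Set.mem_singleton_iff] at hx
    exact ⟨K + 1, show (σ' ^ (K + 1)) (w0 n) = x by rw [hstep1, hx]⟩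


theorem exists_deBruijn (n : ℕ) (hn : 0 < n) :
    ∃ D : ZMod (2 ^ n) → ZMod 2, ∀ w : Fin n → ZMod 2,
      ∃! v : ZMod (2 ^ n), ∀ x : Fin n, D (v + (x : ℕ)) = w x := by
  classical
  haveI : NeZero (2 ^ n) := ⟨by positivity⟩
  -- pick a successor permutation with maximal orbit of w0
  set SP : Finset (Equiv.Perm (Fin n → ZMod 2)) :=
    Finset.univ.filter (fun σ => ∀ y, IsSucc n y (σ y)) with hSP
  have hne : SP.Nonempty := ⟨rot hn, by simp [hSP]; exact rot_succ hn⟩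
  obtain ⟨σ, hσSP, hmax⟩ := SP.exists_max_image (fun σ => (O σ).ncard) hne
  have hσ : ∀ y, IsSucc n y (σ y) := by
    rw [hSP, Finset.mem_filter] at hσSP
    exact hσSP.2
  -- the orbit of w0 is everything
  have hall : ∀ x, x ∈ O σ := by
    by_contra hv
    push_neg at hv
    obtain ⟨v, hv⟩ := hv
    obtain ⟨p, hp0, hpn, hps⟩ := connect hn v (w0 n)
    -- first exit from the orbit
    have hex : ∃ i, p i ∈ O σ ∧ p (i + 1) ∉ O σ := by
      by_contra hex
      push_neg at hex
      have : ∀ i, p i ∈ O σ := by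
        intro i
        induction i with
        | zero => rw [hp0]; exact w0_mem_O σ
        | succ i ih => exact hex i ih
      exact hv (hpn ▸ this n)
    obtain ⟨i, hpi, hpi1⟩ := hex
    obtain ⟨σ', hσ's, hsub⟩ := merge σ hσ hpi hpi1 (hps i)
    have h1 : (O σ).ncard < (O σ').ncard := by
      calc (O σ).ncard < (O σ ∪ {p (i + 1)}).ncard := by
            apply Set.ncard_lt_ncard
            · constructor
              · exact Set.subset_union_left
              · intro hsub2
                exact hpi1 (hsub2 (Set.mem_union_right _ rfl))
            · exact Set.toFinite _
        _ ≤ (O σ').ncard := Set.ncard_le_ncard hsub (Set.toFinite _)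
    have h2 : (O σ').ncard ≤ (O σ).ncard := by
      apply hmax
      rw [hSP, Finset.mem_filter]
      exact ⟨Finset.mem_univ _, hσ's⟩
    omega
  -- minimal period of w0
  obtain ⟨P, hPpos, hPper, hPmin⟩ :
      ∃ P, 0 < P ∧ (σ ^ P) (w0 n) = w0 n ∧
        ∀ p, 0 < p → p < P → (σ ^ p) (w0 n) ≠ w0 n := by
    have hNex : ∃ p, 0 < p ∧ (σ ^ p) (w0 n) = w0 n :=
      ⟨orderOf σ, orderOf_pos σ, by rw [pow_orderOf_eq_one]; rfl⟩
    exact ⟨Nat.find hNex, (Nat.find_spec hNex).1, (Nat.find_spec hNex).2,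
      fun p hp hpP hep => Nat.find_min hNex hpP ⟨hp, hep⟩⟩
  -- the map Fin P → states is bijective, so P = 2^n
  have hg : Function.Bijective (fun i : Fin P => (σ ^ (i : ℕ)) (w0 n)) := by
    constructor
    · intro i j hij
      apply Fin.ext
      rcases le_or_gt (i : ℕ) (j : ℕ) with hle | hlt
      · exact inj_below σ hPmin hle j.isLt hij
      · exact (inj_below σ hPmin hlt.le i.isLt hij.symm).symm
    · intro x
      obtain ⟨k, hk⟩ := hall x
      have hk' : (σ ^ k) (w0 n) = x := hk
      refine ⟨⟨k % P, Nat.mod_lt _ hPpos⟩, ?_⟩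
      show (σ ^ (k % P)) (w0 n) = x
      rw [pow_mod_period σ hPper]
      exact hk'
  have hcard : P = 2 ^ n := by
    have := Fintype.card_of_bijective hg
    simpa [Fintype.card_fun, ZMod.card] using this
  have hq : (σ ^ (2 ^ n)) (w0 n) = w0 n := hcard ▸ hPper
  -- the de Bruijn sequence
  refine ⟨fun v => (σ ^ v.val) (w0 n) ⟨0, hn⟩, ?_⟩
  have key : ∀ (v : ZMod (2 ^ n)) (x : Fin n),
      (σ ^ (v + (x : ℕ) : ZMod (2 ^ n)).val) (w0 n) ⟨0, hn⟩ = (σ ^ v.val) (w0 n) x := by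
    intro v x
    have hval : (v + ((x : ℕ) : ZMod (2 ^ n))).val = (v.val + (x : ℕ)) % 2 ^ n := by
      rw [ZMod.val_add, ZMod.val_natCast, Nat.add_mod_mod]
    rw [hval, pow_mod_period σ hq, show v.val + (x : ℕ) = (x : ℕ) + v.val by ring,
      pow_add, Equiv.Perm.mul_apply, pow_at_zero hn σ hσ (x : ℕ) x.isLt]
  intro w
  -- the evaluation map is bijective
  have he : Function.Bijective (fun v : ZMod (2 ^ n) => ((σ ^ v.val) (w0 n) : Fin n → ZMod 2)) := by
    rw [Fintype.bijective_iff_injective_and_card]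
    constructor
    · intro v v' hvv'
      have h1 : v.val = v'.val := by
        rcases le_or_gt v.val v'.val with hle | hlt
        · exact inj_below σ hPmin hle (hcard ▸ ZMod.val_lt v') hvv'
        · exact (inj_below σ hPmin hlt.le (hcard ▸ ZMod.val_lt v) hvv'.symm).symm
      have := congrArg (Nat.cast : ℕ → ZMod (2 ^ n)) h1
      rwa [ZMod.natCast_rightInverse v, ZMod.natCast_rightInverse v'] at this
    · rw [ZMod.card, Fintype.card_fun, Fintype.card_fin, ZMod.card]
  obtain ⟨v, hv⟩ := he.surjective w
  refine ⟨v, ?_, ?_⟩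
  · intro x
    show (σ ^ ((v + ((x : ℕ) : ZMod (2 ^ n))).val)) (w0 n) ⟨0, hn⟩ = w x
    rw [key]
    exact congrFun hv x
  · intro v' hv'
    apply he.injective
    funext x
    show (σ ^ v'.val) (w0 n) x = (σ ^ v.val) (w0 n) x
    have h1 : (σ ^ v'.val) (w0 n) x = w x := by
      rw [← key v' x]
      exact hv' x
    have h2 : (σ ^ v.val) (w0 n) x = w x := congrFun hv x
    exact h1.trans h2.symm


/-! ### Partial sums of a cyclic sequence -/

/-- an equivalence `Fin M ≃ ZMod M` -/
def zmodFinEquiv (M : ℕ) [NeZero M] : Fin M ≃ ZMod M where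
  toFun i := ((i : ℕ) : ZMod M)
  invFun z := ⟨z.val, ZMod.val_lt z⟩
  left_inv i := by
    apply Fin.ext
    show (((i : ℕ) : ZMod M)).val = (i : ℕ)
    rw [ZMod.val_natCast, Nat.mod_eq_of_lt i.isLt]
  right_inv z := ZMod.natCast_rightInverse z

lemma sum_zmod {M : ℕ} [NeZero M] {A : Type*} [AddCommMonoid A] (G : ZMod M → A) :
    ∑ j ∈ Finset.range M, G (j : ZMod M) = ∑ i, G i := by
  rw [← Fin.sum_univ_eq_sum_range (fun j => G (j : ZMod M)) M]
  exact Fintype.sum_equiv (zmodFinEquiv M) _ _ (fun i => rfl)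

variable {N T : ℕ}

/-- partial sums of the cyclic sequence `F` -/
def PS (F : ZMod T → ZMod N) (k : ℕ) : ZMod N := ∑ l ∈ Finset.range k, F ((l : ℕ) : ZMod T)

lemma PS_succ (F : ZMod T → ZMod N) (k : ℕ) :
    PS F (k + 1) = PS F k + F ((k : ℕ) : ZMod T) :=
  Finset.sum_range_succ _ k

lemma PS_add_T [NeZero T] (F : ZMod T → ZMod N) (hsum : ∑ i, F i = 0) (k : ℕ) :
    PS F (k + T) = PS F k := by
  have h1 : PS F (k + T) = PS F k + ∑ j ∈ Finset.range T, F ((k + j : ℕ) : ZMod T) := by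
    unfold PS
    rw [Finset.range_eq_Ico, ← Finset.sum_Ico_consecutive _ (Nat.zero_le k)
      (Nat.le_add_right k T), ← Finset.range_eq_Ico]
    congr 1
    rw [Finset.sum_Ico_eq_sum_range]
    simp only [Nat.add_sub_cancel_left]
  have h2 : ∑ j ∈ Finset.range T, F ((k + j : ℕ) : ZMod T)
      = ∑ z : ZMod T, F ((k : ZMod T) + z) := by
    rw [← sum_zmod (fun z => F ((k : ZMod T) + z))]
    apply Finset.sum_congr rfl
    intro j _
    rw [Nat.cast_add]
  have h3 : ∑ z : ZMod T, F ((k : ZMod T) + z) = ∑ z : ZMod T, F z :=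
    Fintype.sum_equiv (Equiv.addLeft ((k : ℕ) : ZMod T)) _ _ (fun z => rfl)
  rw [h1, h2, h3, hsum, add_zero]

lemma PS_add_mul [NeZero T] (F : ZMod T → ZMod N) (hsum : ∑ i, F i = 0) (k q : ℕ) :
    PS F (k + T * q) = PS F k := by
  induction q with
  | zero => rfl
  | succ q ih => rw [show k + T * (q + 1) = (k + T * q) + T by ring, PS_add_T F hsum, ih]

lemma PS_mod [NeZero T] (F : ZMod T → ZMod N) (hsum : ∑ i, F i = 0) (k : ℕ) :
    PS F (k % T) = PS F k := by
  conv_rhs => rw [show k = k % T + T * (k / T) from (Nat.mod_add_div k T).symm]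
  rw [PS_add_mul F hsum]

end DBACProof



/-- `C` is an `(r, s; n, m)`-de Bruijn array code of size `Δ`: every `n × m` binary
matrix appears exactly once as a window in exactly one codeword. -/
def IsDBAC (r s n m Δ : ℕ) (C : Fin Δ → (ZMod r × ZMod s → ZMod 2)) : Prop :=
  ∀ M : Fin n → Fin m → ZMod 2,
    ∃! p : Fin Δ × ZMod r × ZMod s,
      ∀ (x : Fin n) (y : Fin m),
        C p.1 (p.2.1 + (x : ℕ), p.2.2 + (y : ℕ)) = M x y

/-- A family `F` of cyclic sequences of length `2^t` over the alphabet `ZMod (2^n)`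
has the perfect-factor window property for span `m`. -/
def IsPFq (n m t Δ : ℕ) (F : Fin Δ → (ZMod (2 ^ t) → ZMod (2 ^ n))) : Prop :=
  ∀ x : Fin m → ZMod (2 ^ n),
    ∃! p : Fin Δ × ZMod (2 ^ t),
      ∀ i : Fin m, F p.1 (p.2 + (i : ℕ)) = x i

theorem stmt_10 (n m t : ℕ) (hn : 2 ≤ n) (hm : 2 ≤ m)
    (hmt : m + 1 < 2 ^ t) (htnm : 2 ^ t ≤ 2 ^ (n * m))
    (F : Fin (2 ^ (n * m - t)) → (ZMod (2 ^ t) → ZMod (2 ^ n)))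
    (hF : IsPFq n m t (2 ^ (n * m - t)) F)
    (hsum : ∀ a, ∑ i : ZMod (2 ^ t), F a i = 0) :
    ∃ C : Fin (2 ^ (n * m - t)) → (ZMod (2 ^ n) × ZMod (2 ^ t) → ZMod 2),
      IsDBAC (2 ^ n) (2 ^ t) n (m + 1) (2 ^ (n * m - t)) C := by
  classical
  haveI : NeZero (2 ^ t) := ⟨by positivity⟩
  obtain ⟨D, hD⟩ := DBACProof.exists_deBruijn n (by omega)
  refine ⟨fun a p => D (p.1 + DBACProof.PS (F a) p.2.val), ?_⟩
  intro M
  -- the unique column values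
  choose v hv1 hv2 using fun y : Fin (m + 1) => hD (fun x => M x y)
  set w : Fin m → ZMod (2 ^ n) := fun k => v k.succ - v k.castSucc with hw
  obtain ⟨⟨a, j⟩, hPa, hUa⟩ := hF w
  simp only at hPa
  -- helper lemmas about partial sums
  have hcastval : ∀ z : ZMod (2 ^ t), (((z.val : ℕ)) : ZMod (2 ^ t)) = z :=
    fun z => ZMod.natCast_rightInverse z
  have hval : ∀ (b : Fin (2 ^ (n * m - t))) (z : ZMod (2 ^ t)) (x : ℕ),
      DBACProof.PS (F b) ((z + (x : ℕ)).val) = DBACProof.PS (F b) (z.val + x) := by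
    intro b z x
    rw [ZMod.val_add, ZMod.val_natCast, Nat.add_mod_mod, DBACProof.PS_mod (F b) (hsum b)]
  -- the key telescoping identity
  have hSw : ∀ y : Fin (m + 1),
      DBACProof.PS (F a) (j.val + (y : ℕ))
        = DBACProof.PS (F a) j.val + (v y - v 0) := by
    intro y
    induction y using Fin.induction with
    | zero => simp
    | succ k ih =>
      have ih' : DBACProof.PS (F a) (j.val + (k : ℕ))
          = DBACProof.PS (F a) j.val + (v k.castSucc - v 0) := ih
      rw [show ((k.succ : Fin (m + 1)) : ℕ) = (k : ℕ) + 1 from rfl, ← add_assoc,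
        DBACProof.PS_succ, ih']
      have hc : (((j.val + (k : ℕ) : ℕ)) : ZMod (2 ^ t)) = j + ((k : ℕ) : ZMod (2 ^ t)) := by
        rw [Nat.cast_add, hcastval j]
      rw [hc, hPa k]
      show _ = _ + (v k.succ - v 0)
      simp only [hw]
      ring
  -- existence
  refine ⟨⟨a, (v 0 - DBACProof.PS (F a) j.val, j)⟩, ?_, ?_⟩
  · intro x y
    show D ((v 0 - DBACProof.PS (F a) j.val) + ((x : ℕ) : ZMod (2 ^ n))
      + DBACProof.PS (F a) ((j + (y : ℕ)).val)) = M x y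
    rw [hval, hSw y, show v 0 - DBACProof.PS (F a) j.val + ((x : ℕ) : ZMod (2 ^ n))
      + (DBACProof.PS (F a) j.val + (v y - v 0)) = v y + (x : ℕ) by ring]
    exact hv1 y x
  · rintro ⟨a', i', j'⟩ hq
    have hu : ∀ y : Fin (m + 1), i' + DBACProof.PS (F a') ((j' + (y : ℕ)).val) = v y := by
      intro y
      apply hv2 y
      intro x
      rw [show i' + DBACProof.PS (F a') ((j' + (y : ℕ)).val) + ((x : ℕ) : ZMod (2 ^ n))
        = i' + (x : ℕ) + DBACProof.PS (F a') ((j' + (y : ℕ)).val) by ring]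
      exact hq x y
    have haj : ((a', j') : Fin (2 ^ (n * m - t)) × ZMod (2 ^ t)) = (a, j) := by
      apply hUa
      intro k
      show F a' (j' + (k : ℕ)) = w k
      have h1 := hu k.succ
      have h2 := hu k.castSucc
      rw [hval] at h1 h2
      rw [show ((k.succ : Fin (m + 1)) : ℕ) = (k : ℕ) + 1 from rfl, ← add_assoc,
        DBACProof.PS_succ] at h1
      have hc : (((j'.val + (k : ℕ) : ℕ)) : ZMod (2 ^ t)) = j' + ((k : ℕ) : ZMod (2 ^ t)) := by
        rw [Nat.cast_add, hcastval j']
      rw [hc] at h1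
      have h2' : i' + DBACProof.PS (F a') (j'.val + (k : ℕ)) = v k.castSucc := h2
      have : F a' (j' + ((k : ℕ) : ZMod (2 ^ t))) = v k.succ - v k.castSucc := by
        rw [← h1, ← h2']
        ring
      rw [this]
    rw [Prod.mk.injEq] at haj
    obtain ⟨ha', hj'⟩ := haj
    have h0 := hu 0
    rw [hval] at h0
    simp only [Fin.val_zero, Nat.cast_zero, add_zero] at h0
    rw [Prod.mk.injEq, Prod.mk.injEq]
    refine ⟨ha', ?_, hj'⟩
    rw [← h0, ha', hj']
    ring
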